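/- For every q ∈ ℂ and x, y ∈ I, the series Σ_{n≥0} |q|^n W^{⊗(n+1)}(x,y) converges and is bounded by W(x,y) · exp(|q| ∫_{(x,y)} W(x,u) m(du)); consequently M^{(q)}(x,y) := Σ_{n≥0} q^n W^{⊗(n+1)}(x,y) defines an entire function of q ∈ ℂ for each fixed x, y. -/

import Mathlib

open MeasureTheory Set Filter
open scoped ENNReal NNReal

noncomputable def otimes (m : Measure ℝ) (f g : ℝ → ℝ → ℝ) : ℝ → ℝ → ℝ :=
  fun x y => ∫ u in Set.Ioo x y, f x u * g u y ∂m

/-- `iterW m W n = W^{⊗(n+1)}` -/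
noncomputable def iterW (m : Measure ℝ) (W : ℝ → ℝ → ℝ) : ℕ → ℝ → ℝ → ℝ
  | 0 => W
  | n + 1 => otimes m W (iterW m W n)

/-- Analytic extension `M^{(q)}(x,y) = Σ_{n≥0} q^n W^{⊗(n+1)}(x,y)` for complex `q`. -/
noncomputable def Mq (m : Measure ℝ) (W : ℝ → ℝ → ℝ) (q : ℂ) (x y : ℝ) : ℂ :=
  ∑' n : ℕ, q ^ n * ((iterW m W n x y : ℝ) : ℂ)

/-- Real version of `M^{(q)}`. -/
noncomputable def Mr (m : Measure ℝ) (W : ℝ → ℝ → ℝ) (q : ℝ) (x y : ℝ) : ℝ :=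
  ∑' n : ℕ, q ^ n * iterW m W n x y

/-- `Z^{(q)}(x,y) = 1 + Σ_{n≥0} q^{n+1} ∫_{(x,y)} W^{⊗(n+1)}(x,u) m(du)`. -/
noncomputable def Zq (m : Measure ℝ) (W : ℝ → ℝ → ℝ) (q : ℂ) (x y : ℝ) : ℂ :=
  1 + ∑' n : ℕ, q ^ (n + 1) * ((∫ u in Set.Ioo x y, iterW m W n x u ∂m : ℝ) : ℂ)

/-- For a finite measure `ν` on `ℝ`, the set where the "tail" `ν (Ioi a)` exceeds `t`
has measure at most `ν univ - t`. -/
lemma meas_tail_le (ν : Measure ℝ) [IsFiniteMeasure ν] {t : ℝ} (ht : 0 < t) :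
    ν {a | t ≤ (ν (Set.Ioi a)).toReal} ≤ ENNReal.ofReal ((ν Set.univ).toReal - t) := by
  have hfin : ∀ s : Set ℝ, ν s ≠ ∞ := fun s => measure_ne_top ν s
  have hset : {a | t ≤ (ν (Set.Ioi a)).toReal} = {a | ENNReal.ofReal t ≤ ν (Set.Ioi a)} := by
    ext a
    simp only [Set.mem_setOf_eq]
    rw [ENNReal.ofReal_le_iff_le_toReal (hfin _)]
  rw [hset]
  set B := {a : ℝ | ENNReal.ofReal t ≤ ν (Set.Ioi a)} with hB
  have hlow : ∀ a b : ℝ, a ≤ b → b ∈ B → a ∈ B := by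
    intro a b hab hb
    exact le_trans hb (measure_mono (Set.Ioi_subset_Ioi hab))
  rcases Set.eq_empty_or_nonempty B with hBe | hne
  · rw [hBe]; simp
  have hbdd : BddAbove B := by
    by_contra hnb
    have h1 : ∀ n : ℕ, ENNReal.ofReal t ≤ ν (Set.Ioi (n : ℝ)) := by
      intro n
      obtain ⟨a, ha, hna⟩ := not_bddAbove_iff.mp hnb (n : ℝ)
      exact le_trans ha (measure_mono (Set.Ioi_subset_Ioi hna.le))
    have h2 : (⋂ n : ℕ, Set.Ioi (n : ℝ)) = ∅ := by
      ext a
      simp only [Set.mem_iInter, Set.mem_Ioi, Set.mem_empty_iff_false, iff_false, not_forall,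
        not_lt]
      obtain ⟨n, hn⟩ := exists_nat_gt a
      exact ⟨n, hn.le⟩
    have h3 : Antitone fun n : ℕ => Set.Ioi (n : ℝ) := by
      intro a b hab
      exact Set.Ioi_subset_Ioi (by exact_mod_cast hab)
    have h4 := h3.measure_iInter (fun n => measurableSet_Ioi.nullMeasurableSet)
      ⟨0, hfin _⟩ (μ := ν)
    rw [h2] at h4
    have h5 : ENNReal.ofReal t ≤ ν ∅ := h4 ▸ le_iInf h1
    rw [measure_empty] at h5
    exact absurd (ENNReal.ofReal_eq_zero.mp (le_zero_iff.mp h5)) (not_le.mpr ht)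
  set s := sSup B with hs
  have hkey : ν B + ENNReal.ofReal t ≤ ν Set.univ := by
    by_cases hsB : s ∈ B
    · calc ν B + ENNReal.ofReal t ≤ ν (Set.Iic s) + ν (Set.Ioi s) :=
            add_le_add (measure_mono fun a ha => le_csSup hbdd ha) hsB
        _ = ν Set.univ := by
            rw [← Set.compl_Iic]
            exact measure_add_measure_compl measurableSet_Iic
    · have hBs : B = Set.Iio s := by
        apply subset_antisymm
        · intro a ha
          exact lt_of_le_of_ne (le_csSup hbdd ha) (by rintro rfl; exact hsB ha)
        · intro a ha
          obtain ⟨b, hb, hab⟩ := exists_lt_of_lt_csSup hne ha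
          exact hlow a b hab.le hb
      have hIci : ENNReal.ofReal t ≤ ν (Set.Ici s) := by
        have hIci_eq : Set.Ici s = ⋂ n : ℕ, Set.Ioi (s - 1 / (n + 1)) := by
          ext a
          simp only [Set.mem_Ici, Set.mem_iInter, Set.mem_Ioi]
          constructor
          · intro h n
            have : (0:ℝ) < 1 / (n + 1) := by positivity
            linarith
          · intro h
            by_contra hc
            push_neg at hc
            obtain ⟨n, hn⟩ := exists_nat_one_div_lt (show (0:ℝ) < s - a by linarith)
            have := h n
            linarith
        have hanti : Antitone fun n : ℕ => Set.Ioi (s - 1 / ((n:ℝ) + 1)) := by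
          intro a b hab
          apply Set.Ioi_subset_Ioi
          have : (1:ℝ) / ((b:ℝ) + 1) ≤ 1 / ((a:ℝ) + 1) := by
            apply one_div_le_one_div_of_le (by positivity)
            exact_mod_cast Nat.add_le_add_right hab 1
          linarith
        rw [hIci_eq, hanti.measure_iInter (fun n => measurableSet_Ioi.nullMeasurableSet)
          ⟨0, hfin _⟩]
        refine le_iInf fun n => ?_
        have : s - 1 / ((n:ℝ) + 1) ∈ B := by
          rw [hBs]
          simp only [Set.mem_Iio]
          have : (0:ℝ) < 1 / ((n:ℝ) + 1) := by positivity
          linarith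
        exact this
      calc ν B + ENNReal.ofReal t ≤ ν (Set.Iio s) + ν (Set.Ici s) :=
            add_le_add (measure_mono (hBs ▸ le_rfl)) hIci
        _ = ν Set.univ := by
            rw [add_comm, ← Set.compl_Ici]
            exact measure_add_measure_compl measurableSet_Ici
  have htc : t ≤ (ν Set.univ).toReal := by
    have h6 : ENNReal.ofReal t ≤ ν Set.univ := le_trans (le_add_self : ENNReal.ofReal t ≤ ν B + ENNReal.ofReal t) hkey
    exact (ENNReal.ofReal_le_iff_le_toReal (hfin _)).mp h6
  have heq : ENNReal.ofReal ((ν Set.univ).toReal - t) + ENNReal.ofReal t = ν Set.univ := by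
    rw [← ENNReal.ofReal_add (by linarith) ht.le, sub_add_cancel,
      ENNReal.ofReal_toReal (hfin Set.univ)]
  exact (ENNReal.add_le_add_iff_right ENNReal.ofReal_ne_top).mp (heq ▸ hkey)

lemma keyENN (ν : Measure ℝ) [IsFiniteMeasure ν] (n : ℕ) :
    ∫⁻ a, (ν (Set.Ioi a)) ^ n ∂ν ≤ (ν Set.univ) ^ (n + 1) / (n + 1) := by
  match n with
  | 0 => simp
  | (k + 1) =>
    have hfin : ∀ s : Set ℝ, ν s ≠ ∞ := fun s => measure_ne_top ν s
    set cr := (ν Set.univ).toReal with hcr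
    have hcr0 : 0 ≤ cr := ENNReal.toReal_nonneg
    have hFanti : Antitone fun a => ν (Set.Ioi a) := fun a b hab =>
      measure_mono (Set.Ioi_subset_Ioi hab)
    have hFm : Measurable fun a => ν (Set.Ioi a) := hFanti.measurable
    have hfm : Measurable fun a : ℝ => (ν (Set.Ioi a)).toReal :=
      ENNReal.measurable_toReal.comp hFm
    have h1 : ∀ a : ℝ, (ν (Set.Ioi a)) ^ (k + 1) =
        ENNReal.ofReal (∫ t in (0:ℝ)..((ν (Set.Ioi a)).toReal), ((k:ℝ) + 1) * t ^ k) := by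
      intro a
      rw [intervalIntegral.integral_const_mul, integral_pow]
      rw [show ((k:ℝ) + 1) * (((ν (Set.Ioi a)).toReal ^ (k + 1) - 0 ^ (k + 1)) / ((k:ℝ) + 1)) = (ν (Set.Ioi a)).toReal ^ (k + 1) by
        have hk : ((k:ℝ) + 1) ≠ 0 := by positivity
        field_simp; simp]
      rw [ENNReal.ofReal_pow ENNReal.toReal_nonneg, ENNReal.ofReal_toReal (hfin _)]
    have step1 : ∫⁻ a, (ν (Set.Ioi a)) ^ (k + 1) ∂ν
        = ∫⁻ t in Set.Ioi (0:ℝ), ν {a : ℝ | t ≤ (ν (Set.Ioi a)).toReal} * ENNReal.ofReal (((k:ℝ) + 1) * t ^ k) := by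
      rw [lintegral_congr h1]
      apply lintegral_comp_eq_lintegral_meas_le_mul ν
        (ae_of_all _ fun a => ENNReal.toReal_nonneg) hfm.aemeasurable
      · intro t ht
        exact (continuous_const.mul (continuous_pow k)).intervalIntegrable _ _
      · filter_upwards [ae_restrict_mem measurableSet_Ioi] with t (ht : 0 < t)
        positivity
    have step2 : ∫⁻ t in Set.Ioi (0:ℝ), ν {a : ℝ | t ≤ (ν (Set.Ioi a)).toReal} * ENNReal.ofReal (((k:ℝ) + 1) * t ^ k)
        ≤ ∫⁻ t in Set.Ioi (0:ℝ), ENNReal.ofReal ((cr - t) * (((k:ℝ) + 1) * t ^ k)) := by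
      apply lintegral_mono_ae
      filter_upwards [ae_restrict_mem measurableSet_Ioi] with t (ht : 0 < t)
      rcases le_or_gt t cr with h | h
      · calc ν {a : ℝ | t ≤ (ν (Set.Ioi a)).toReal} * ENNReal.ofReal (((k:ℝ) + 1) * t ^ k)
            ≤ ENNReal.ofReal (cr - t) * ENNReal.ofReal (((k:ℝ) + 1) * t ^ k) :=
              mul_le_mul_left (meas_tail_le ν ht) _
          _ = ENNReal.ofReal ((cr - t) * (((k:ℝ) + 1) * t ^ k)) :=
              (ENNReal.ofReal_mul (by linarith)).symm
      · have h2 : ν {a : ℝ | t ≤ (ν (Set.Ioi a)).toReal} ≤ ENNReal.ofReal (cr - t) :=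
          meas_tail_le ν ht
        rw [ENNReal.ofReal_of_nonpos (by linarith)] at h2
        rw [le_zero_iff.mp h2, zero_mul]
        exact bot_le
    have hIoc : ∫⁻ t in Set.Ioc (0:ℝ) cr, ENNReal.ofReal ((cr - t) * (((k:ℝ) + 1) * t ^ k))
        = ENNReal.ofReal (cr ^ (k + 2) / ((k:ℝ) + 2)) := by
      have hcont : Continuous fun t : ℝ => (cr - t) * (((k:ℝ) + 1) * t ^ k) := by continuity
      have hint : IntegrableOn (fun t : ℝ => (cr - t) * (((k:ℝ) + 1) * t ^ k))
          (Set.Ioc (0:ℝ) cr) volume := hcont.integrableOn_Ioc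
      have hnn : (0:ℝ → ℝ) ≤ᵐ[volume.restrict (Set.Ioc (0:ℝ) cr)]
          fun t => (cr - t) * (((k:ℝ) + 1) * t ^ k) := by
        filter_upwards [ae_restrict_mem measurableSet_Ioc] with t ht
        have h1 : 0 < t := ht.1
        have h2 : t ≤ cr := ht.2
        have : (0:ℝ) ≤ cr - t := by linarith
        positivity
      rw [← ofReal_integral_eq_lintegral_ofReal hint hnn]
      congr 1
      rw [← intervalIntegral.integral_of_le hcr0]
      have hrw : ∀ t : ℝ, (cr - t) * (((k:ℝ) + 1) * t ^ k)
          = ((k:ℝ) + 1) * cr * t ^ k - ((k:ℝ) + 1) * t ^ (k + 1) := fun t => by ring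
      simp_rw [hrw]
      rw [intervalIntegral.integral_sub (f := fun x => ((k:ℝ) + 1) * cr * x ^ k)
          (g := fun x => ((k:ℝ) + 1) * x ^ (k + 1))
          ((continuous_const.mul (continuous_pow k)).intervalIntegrable _ _)
          ((continuous_const.mul (continuous_pow (k+1))).intervalIntegrable _ _),
        intervalIntegral.integral_const_mul, intervalIntegral.integral_const_mul,
        integral_pow, integral_pow]
      have hk1 : ((k:ℝ) + 1) ≠ 0 := by positivity
      have hk2 : ((k:ℝ) + 2) ≠ 0 := by positivity
      field_simp
      push_cast
      ring
    have step3 : ∫⁻ t in Set.Ioi (0:ℝ), ENNReal.ofReal ((cr - t) * (((k:ℝ) + 1) * t ^ k))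
        = ENNReal.ofReal (cr ^ (k + 2) / ((k:ℝ) + 2)) := by
      rw [show Set.Ioi (0:ℝ) = Set.Ioc 0 cr ∪ Set.Ioi cr from (Set.Ioc_union_Ioi_eq_Ioi hcr0).symm,
        lintegral_union measurableSet_Ioi (Set.Ioc_disjoint_Ioi le_rfl)]
      have hzero : ∫⁻ t in Set.Ioi cr, ENNReal.ofReal ((cr - t) * (((k:ℝ) + 1) * t ^ k)) = 0 := by
        rw [setLIntegral_congr_fun measurableSet_Ioi (fun t (ht : cr < t) => by
          have h0t : (0:ℝ) ≤ t := le_trans hcr0 ht.le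
          exact ENNReal.ofReal_of_nonpos
            (mul_nonpos_of_nonpos_of_nonneg (by linarith) (by positivity)))]
        simp
      rw [hzero, add_zero, hIoc]
    have hfinal : ENNReal.ofReal (cr ^ (k + 2) / ((k:ℝ) + 2))
        = (ν Set.univ) ^ (k + 1 + 1) / ((k:ℝ≥0∞) + 1 + 1) := by
      rw [ENNReal.ofReal_div_of_pos (by positivity), ENNReal.ofReal_pow hcr0,
        ENNReal.ofReal_toReal (hfin _),
        show ((k:ℝ) + 2) = ((k + 2 : ℕ) : ℝ) by push_cast; ring, ENNReal.ofReal_natCast,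
        show ((k + 2 : ℕ) : ℝ≥0∞) = (k:ℝ≥0∞) + 1 + 1 by push_cast; ring]
    calc ∫⁻ a, (ν (Set.Ioi a)) ^ (k + 1) ∂ν
        ≤ ∫⁻ t in Set.Ioi (0:ℝ), ENNReal.ofReal ((cr - t) * (((k:ℝ) + 1) * t ^ k)) :=
          step1 ▸ step2
      _ = (ν Set.univ) ^ (k + 1 + 1) / ((k:ℝ≥0∞) + 1 + 1) := step3.trans hfinal
      _ = (ν Set.univ) ^ (k + 1 + 1) / (((k:ℕ) + 1 : ℕ) + 1 : ℝ≥0∞) := by norm_cast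

lemma keyReal (μ : Measure ℝ) (f : ℝ → ℝ) (hfm : Measurable f) (hf0 : ∀ t, 0 ≤ f t)
    (hfi : Integrable f μ) (n : ℕ) :
    ∫ t, f t * (∫ s in Set.Ioi t, f s ∂μ) ^ n ∂μ
      ≤ (∫ t, f t ∂μ) ^ (n + 1) / ((n : ℝ) + 1) := by
  set ν := μ.withDensity (fun t => ENNReal.ofReal (f t)) with hν
  haveI : IsFiniteMeasure ν := isFiniteMeasure_withDensity_ofReal hfi.hasFiniteIntegral
  have hofm : Measurable fun t => ENNReal.ofReal (f t) := ENNReal.measurable_ofReal.comp hfm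
  have hνuniv : ν Set.univ = ENNReal.ofReal (∫ t, f t ∂μ) := by
    rw [hν, withDensity_apply _ MeasurableSet.univ, Measure.restrict_univ,
      ofReal_integral_eq_lintegral_ofReal hfi (ae_of_all _ hf0)]
  have hIoi : ∀ t : ℝ, ν (Set.Ioi t) = ENNReal.ofReal (∫ s in Set.Ioi t, f s ∂μ) := by
    intro t
    rw [hν, withDensity_apply _ measurableSet_Ioi,
      ofReal_integral_eq_lintegral_ofReal hfi.integrableOn (ae_of_all _ hf0)]
  have hIoiR : ∀ t : ℝ, ∫ s in Set.Ioi t, f s ∂μ = (ν (Set.Ioi t)).toReal := by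
    intro t
    rw [hIoi, ENNReal.toReal_ofReal (setIntegral_nonneg measurableSet_Ioi fun s _ => hf0 s)]
  have hFanti : Antitone fun a => ν (Set.Ioi a) := fun a b hab =>
    measure_mono (Set.Ioi_subset_Ioi hab)
  have hFm : Measurable fun a => ν (Set.Ioi a) := hFanti.measurable
  have lhs_eq : ∫ t, f t * (∫ s in Set.Ioi t, f s ∂μ) ^ n ∂μ
      = (∫⁻ t, (ν (Set.Ioi t)) ^ n ∂ν).toReal := by
    have hmeas : AEStronglyMeasurable (fun t => f t * ((ν (Set.Ioi t)).toReal) ^ n) μ :=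
      (hfm.mul ((ENNReal.measurable_toReal.comp hFm).pow_const n)).aestronglyMeasurable
    simp_rw [hIoiR]
    rw [integral_eq_lintegral_of_nonneg_ae
      (ae_of_all _ fun t => mul_nonneg (hf0 t) (pow_nonneg ENNReal.toReal_nonneg n)) hmeas]
    congr 1
    rw [hν, lintegral_withDensity_eq_lintegral_mul μ hofm (hFm.pow_const n)]
    apply lintegral_congr
    intro t
    simp only [Pi.mul_apply]
    rw [ENNReal.ofReal_mul (hf0 t), ENNReal.ofReal_pow ENNReal.toReal_nonneg,
      ENNReal.ofReal_toReal (measure_ne_top ν _)]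
  rw [lhs_eq]
  have hle := keyENN ν n
  have hne : (ν Set.univ) ^ (n + 1) / ((n : ℝ≥0∞) + 1) ≠ ∞ := by
    apply (ENNReal.div_lt_top (ENNReal.pow_ne_top (measure_ne_top ν _)) _).ne
    simp
  calc (∫⁻ t, (ν (Set.Ioi t)) ^ n ∂ν).toReal
      ≤ ((ν Set.univ) ^ (n + 1) / ((n : ℝ≥0∞) + 1)).toReal := ENNReal.toReal_mono hne hle
    _ = (∫ t, f t ∂μ) ^ (n + 1) / ((n : ℝ) + 1) := by
        rw [ENNReal.toReal_div, ENNReal.toReal_pow, hνuniv,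
          ENNReal.toReal_ofReal (integral_nonneg hf0),
          show ((n:ℝ≥0∞) + 1).toReal = (n:ℝ) + 1 by
            rw [ENNReal.toReal_add (by simp) (by simp)]; simp]

lemma iterW_nonneg (m : Measure ℝ) (W : ℝ → ℝ → ℝ) (hWnn : ∀ x y, 0 ≤ W x y) :
    ∀ n u v, 0 ≤ iterW m W n u v := by
  intro n
  induction n with
  | zero => exact hWnn
  | succ n ih =>
    intro u v
    exact integral_nonneg fun t => mul_nonneg (hWnn u t) (ih t v)

lemma iterW_le (m : Measure ℝ) (W : ℝ → ℝ → ℝ)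
    (hWmeas : Measurable (Function.uncurry W))
    (hWnn : ∀ x y, 0 ≤ W x y)
    (hWmono : ∀ x x' y : ℝ, x ≤ x' → x' ≤ y → W x' y ≤ W x y)
    {x y : ℝ} (hint : IntegrableOn (fun u => W x u) (Set.Ioo x y) m) (n : ℕ) :
    iterW m W n x y ≤ W x y * (∫ u in Set.Ioo x y, W x u ∂m) ^ n / n.factorial := by
  by_cases hxy : x < y
  swap
  · have he : Set.Ioo x y = (∅ : Set ℝ) := Set.Ioo_eq_empty hxy
    match n with
    | 0 =>
      show W x y ≤ W x y * (∫ u in Set.Ioo x y, W x u ∂m) ^ 0 / (Nat.factorial 0)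
      simp
    | (k + 1) =>
      have : iterW m W (k + 1) x y = 0 := by
        show (∫ u in Set.Ioo x y, W x u * iterW m W k u y ∂m) = 0
        rw [he, Measure.restrict_empty, integral_zero_measure]
      rw [this]
      have hC0 : 0 ≤ ∫ u in Set.Ioo x y, W x u ∂m :=
        setIntegral_nonneg measurableSet_Ioo fun t _ => hWnn x t
      have := hWnn x y
      positivity
  · have hWx : Measurable fun t => W x t := hWmeas.of_uncurry_left
    set C := ∫ u in Set.Ioo x y, W x u ∂m with hCdef
    have hC0 : 0 ≤ C := setIntegral_nonneg measurableSet_Ioo fun t _ => hWnn x t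
    set h : ℝ → ℝ := fun u => ∫ t in Set.Ioo (max u x) y, W x t ∂m with hhdef
    have hanti : Antitone h := by
      intro a b hab
      apply setIntegral_mono_set (hint.mono_set (Set.Ioo_subset_Ioo_left (le_max_right a x)))
        (ae_of_all _ fun t => hWnn x t)
      exact HasSubset.Subset.eventuallyLE
        (Set.Ioo_subset_Ioo_left (max_le_max hab le_rfl))
    have hmeas_h : Measurable h := hanti.measurable
    have hhx : h x = C := by rw [hhdef]; simp [hCdef]
    have hhu : ∀ u, x ≤ u → h u = ∫ t in Set.Ioo u y, W x t ∂m := by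
      intro u hu
      rw [hhdef]
      simp [max_eq_left hu]
    have hh0 : ∀ u, 0 ≤ h u := fun u =>
      setIntegral_nonneg measurableSet_Ioo fun t _ => hWnn x t
    have hhC : ∀ u, h u ≤ C := by
      intro u
      rcases le_total x u with hu | hu
      · rw [← hhx]; exact hanti hu
      · rw [hhdef]
        simp only
        rw [max_eq_right hu, ← hCdef]
    have claim : ∀ n, ∀ u ∈ Set.Ico x y,
        iterW m W n u y ≤ W u y * h u ^ n / n.factorial := by
      intro n
      induction n with
      | zero =>
        intro u _
        show W u y ≤ W u y * h u ^ 0 / (Nat.factorial 0)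
        simp
      | succ n ih =>
        intro u hu
        obtain ⟨hu1, hu2⟩ := hu
        have hsub : Set.Ioo u y ⊆ Set.Ioo x y := Set.Ioo_subset_Ioo_left hu1
        have hintu : IntegrableOn (fun t => W x t) (Set.Ioo u y) m := hint.mono_set hsub
        have hbint : IntegrableOn (fun t => W x t * (W u y * h t ^ n / n.factorial))
            (Set.Ioo u y) m := by
          apply Integrable.mono' (g := fun t => (W u y * C ^ n / n.factorial) * W x t)
            (hintu.const_mul _)
            ((hWx.mul ((measurable_const.mul (hmeas_h.pow_const n)).div_const _)).aestronglyMeasurable)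
          apply ae_of_all
          intro t
          simp only [Pi.mul_apply]
          rw [Real.norm_eq_abs, abs_of_nonneg (mul_nonneg (hWnn x t) (div_nonneg
            (mul_nonneg (hWnn u y) (pow_nonneg (hh0 t) n)) (Nat.cast_nonneg _)))]
          rw [mul_comm (W u y * C ^ n / ↑n.factorial) (W x t)]
          apply mul_le_mul_of_nonneg_left _ (hWnn x t)
          gcongr
          · exact hWnn u y
          · exact hh0 t
          · exact hhC t
        have step1 : iterW m W (n + 1) u y
            = ∫ t in Set.Ioo u y, W u t * iterW m W n t y ∂m := rfl
        have step2 : (∫ t in Set.Ioo u y, W u t * iterW m W n t y ∂m)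
            ≤ ∫ t in Set.Ioo u y, W x t * (W u y * h t ^ n / n.factorial) ∂m := by
          apply integral_mono_of_nonneg
            (ae_of_all _ fun t => mul_nonneg (hWnn u t) (iterW_nonneg m W hWnn n t y)) hbint
          filter_upwards [ae_restrict_mem measurableSet_Ioo] with t ht
          have h1 : W u t ≤ W x t := hWmono x u t hu1 ht.1.le
          have h2 : iterW m W n t y ≤ W t y * h t ^ n / n.factorial :=
            ih t ⟨le_trans hu1 ht.1.le, ht.2⟩
          have h3 : W t y ≤ W u y := hWmono u t y ht.1.le ht.2.le
          calc W u t * iterW m W n t y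
              ≤ W x t * (W t y * h t ^ n / n.factorial) :=
                mul_le_mul h1 h2 (iterW_nonneg m W hWnn n t y) (hWnn x t)
            _ ≤ W x t * (W u y * h t ^ n / n.factorial) := by
                exact mul_le_mul_of_nonneg_left ((div_le_div_iff_of_pos_right (by positivity :
                    (0:ℝ) < n.factorial)).mpr
                  (mul_le_mul_of_nonneg_right h3 (pow_nonneg (hh0 t) n))) (hWnn x t)
        have step3 : (∫ t in Set.Ioo u y, W x t * (W u y * h t ^ n / n.factorial) ∂m)
            = (W u y / n.factorial) * ∫ t in Set.Ioo u y, W x t * h t ^ n ∂m := by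
          rw [show (fun t => W x t * (W u y * h t ^ n / (n.factorial:ℝ)))
              = fun t => (W u y / (n.factorial:ℝ)) * (W x t * h t ^ n) from
            funext fun t => by ring, integral_const_mul]
        have step4 : (∫ t in Set.Ioo u y, W x t * h t ^ n ∂m) ≤ h u ^ (n+1) / ((n:ℝ)+1) := by
          have hk := keyReal (m.restrict (Set.Ioo u y)) (fun t => W x t) hWx
            (fun t => hWnn x t) hintu n
          rw [hhu u hu1]
          refine le_trans (le_of_eq ?_) hk
          apply integral_congr_ae
          filter_upwards [ae_restrict_mem measurableSet_Ioo] with t ht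
          congr 1
          congr 1
          rw [Measure.restrict_restrict measurableSet_Ioi,
            show Set.Ioi t ∩ Set.Ioo u y = Set.Ioo t y from by
              ext s
              simp only [Set.mem_inter_iff, Set.mem_Ioi, Set.mem_Ioo]
              exact ⟨fun ⟨h1, _, h3⟩ => ⟨h1, h3⟩, fun ⟨h1, h2⟩ => ⟨h1, lt_trans ht.1 h1, h2⟩⟩,
            hhu t (le_trans hu1 ht.1.le)]
        rw [step1]
        refine le_trans step2 (le_trans (le_of_eq step3) ?_)
        refine le_trans (mul_le_mul_of_nonneg_left step4
          (div_nonneg (hWnn u y) (Nat.cast_nonneg n.factorial))) (le_of_eq ?_)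
        rw [Nat.factorial_succ, Nat.cast_mul]
        have h1 : ((n.factorial:ℝ)) ≠ 0 := Nat.cast_ne_zero.mpr n.factorial_ne_zero
        have h2 : ((n:ℝ)+1) ≠ 0 := by positivity
        have h3 : ((n+1:ℕ):ℝ) = (n:ℝ)+1 := by push_cast; ring
        rw [h3, div_mul_div_comm, mul_comm ((n.factorial:ℝ)) ((n:ℝ)+1)]
    have hcl := claim n x ⟨le_rfl, hxy⟩
    rwa [hhx] at hcl

theorem stmt1 (I : Set ℝ) (m : Measure ℝ) (W : ℝ → ℝ → ℝ)
    (hWmeas : Measurable (Function.uncurry W))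
    (hWnn : ∀ x y, 0 ≤ W x y)
    (hWvanish : ∀ x y : ℝ, y < x → W x y = 0)
    (hWmono : ∀ x x' y : ℝ, x ≤ x' → x' ≤ y → W x' y ≤ W x y)
    (hWint : ∀ x y : ℝ, x ∈ I → y ∈ I → x < y →
      IntegrableOn (fun u => W x u) (Set.Ioo x y) m)
    (q : ℂ) (x y : ℝ) (hx : x ∈ I) (hy : y ∈ I) :
    Summable (fun n : ℕ => ‖q‖ ^ n * iterW m W n x y) ∧
    (∑' n : ℕ, ‖q‖ ^ n * iterW m W n x y) ≤
      W x y * Real.exp (‖q‖ * ∫ u in Set.Ioo x y, W x u ∂m) ∧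
    Differentiable ℂ (fun z : ℂ => Mq m W z x y) := by
  have hint : IntegrableOn (fun u => W x u) (Set.Ioo x y) m := by
    by_cases hxy : x < y
    · exact hWint x y hx hy hxy
    · rw [Set.Ioo_eq_empty hxy]
      exact integrableOn_empty
  set C := ∫ u in Set.Ioo x y, W x u ∂m with hC
  have hC0 : 0 ≤ C := setIntegral_nonneg measurableSet_Ioo fun t _ => hWnn x t
  have hle : ∀ n, iterW m W n x y ≤ W x y * C ^ n / n.factorial :=
    iterW_le m W hWmeas hWnn hWmono hint
  have hnn : ∀ n, 0 ≤ iterW m W n x y := fun n => iterW_nonneg m W hWnn n x y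
  have hterm : ∀ r : ℝ, 0 ≤ r → ∀ n : ℕ,
      r ^ n * iterW m W n x y ≤ W x y * ((r * C) ^ n / n.factorial) := by
    intro r hr n
    calc r ^ n * iterW m W n x y ≤ r ^ n * (W x y * C ^ n / n.factorial) :=
          mul_le_mul_of_nonneg_left (hle n) (pow_nonneg hr n)
      _ = W x y * ((r * C) ^ n / n.factorial) := by rw [mul_pow]; ring
  have hsummaj : ∀ r : ℝ, Summable fun n : ℕ => W x y * ((r * C) ^ n / n.factorial) :=
    fun r => (Real.summable_pow_div_factorial (r * C)).mul_left (W x y)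
  have hsum : ∀ r : ℝ, 0 ≤ r → Summable fun n : ℕ => r ^ n * iterW m W n x y := by
    intro r hr
    exact Summable.of_nonneg_of_le (fun n => mul_nonneg (pow_nonneg hr n) (hnn n))
      (hterm r hr) (hsummaj r)
  refine ⟨hsum ‖q‖ (norm_nonneg q), ?_, ?_⟩
  · calc (∑' n : ℕ, ‖q‖ ^ n * iterW m W n x y)
        ≤ ∑' n : ℕ, W x y * ((‖q‖ * C) ^ n / n.factorial) :=
          Summable.tsum_le_tsum (hterm ‖q‖ (norm_nonneg q)) (hsum ‖q‖ (norm_nonneg q)) (hsummaj ‖q‖)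
      _ = W x y * ∑' n : ℕ, (‖q‖ * C) ^ n / n.factorial := tsum_mul_left
      _ = W x y * Real.exp (‖q‖ * C) := by
          rw [Real.exp_eq_exp_ℝ, NormedSpace.exp_eq_tsum_div]
  · set p : FormalMultilinearSeries ℂ ℂ ℂ :=
      fun n => ContinuousMultilinearMap.mkPiRing ℂ (Fin n) ((iterW m W n x y : ℝ) : ℂ) with hp
    have hnorm : ∀ n, ‖p n‖ = iterW m W n x y := by
      intro n
      rw [hp]
      rw [ContinuousMultilinearMap.norm_mkPiRing, Complex.norm_real, Real.norm_eq_abs,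
        abs_of_nonneg (hnn n)]
    have hrad : p.radius = ⊤ := by
      apply p.radius_eq_top_of_summable_norm
      intro r
      apply Summable.congr (hsum (r : ℝ) r.coe_nonneg)
      intro n
      rw [hnorm, mul_comm]
    have hball := p.hasFPowerSeriesOnBall (by rw [hrad]; exact ENNReal.zero_lt_top )
    have hMq : (fun z : ℂ => Mq m W z x y) = p.sum := by
      funext z
      rw [Mq, FormalMultilinearSeries.sum]
      apply tsum_congr
      intro n
      rw [hp]
      rw [ContinuousMultilinearMap.mkPiRing_apply]
      simp only [Finset.prod_const, Finset.card_univ, Fintype.card_fin, smul_eq_mul]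
    rw [hMq]
    intro z
    have hz : z ∈ EMetric.ball (0:ℂ) p.radius := by
      rw [hrad]
      exact edist_lt_top z 0
    exact (hball.differentiableOn z hz).differentiableAt
      (EMetric.isOpen_ball.mem_nhds hz)
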